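/- Let b and t be positive integers and k ≥ 2 an integer such that b, b+t, b+2t, …, b+(k−1)t are all powerful numbers. Then every prime p with 2p ≤ k divides t. -/

import Mathlib

/-- A positive integer is powerful if every prime dividing it does so at
least to the second power. -/
def Powerful (n : ℕ) : Prop := 0 < n ∧ ∀ p : ℕ, p.Prime → p ∣ n → p ^ 2 ∣ n

/-- If `b, b+t, …, b+(k-1)t` are all powerful, then every prime `p` with
`2p ≤ k` divides `t`. -/
theorem stmt_18 (b t : ℕ) (hb : 0 < b) (ht : 0 < t) (k : ℕ) (hk : 2 ≤ k)
    (hW : ∀ j : ℕ, j < k → Powerful (b + j * t)) :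
    ∀ p : ℕ, p.Prime → 2 * p ≤ k → p ∣ t := by
  intro p hp hpk
  by_cases hpt : p ∣ t
  · exact hpt
  haveI := Fact.mk hp
  have htne : (t : ZMod p) ≠ 0 := by
    simpa [ZMod.natCast_eq_zero_iff] using hpt
  set j0 := ((-(b : ZMod p)) * (t : ZMod p)⁻¹).val with hj0
  have hj0lt : j0 < p := ZMod.val_lt _
  have hdvd1 : p ∣ b + j0 * t := by
    have h0 : ((b + j0 * t : ℕ) : ZMod p) = 0 := by
      push_cast
      rw [hj0, ZMod.natCast_val, ZMod.cast_id]
      field_simp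
      ring
    exact (ZMod.natCast_eq_zero_iff _ _).mp h0
  have hdvd2 : p ∣ b + (j0 + p) * t := by
    have he : b + (j0 + p) * t = (b + j0 * t) + p * t := by ring
    rw [he]
    exact Nat.dvd_add hdvd1 ⟨t, rfl⟩
  have h1 := (hW j0 (by omega)).2 p hp hdvd1
  have h2 := (hW (j0 + p) (by omega)).2 p hp hdvd2
  have hsub : p ^ 2 ∣ p * t := by
    have hd := Nat.dvd_sub h2 h1
    have he : b + (j0 + p) * t - (b + j0 * t) = p * t := by
      have : b + (j0 + p) * t = (b + j0 * t) + p * t := by ring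
      omega
    rwa [he] at hd
  have : p * p ∣ p * t := by rwa [pow_two] at hsub
  exact (Nat.mul_dvd_mul_iff_left hp.pos).mp this
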